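/- arXiv:2407.06496 — 2 statements merged into one kernel-verified Lean document; each statement's English description precedes it below -/
import Mathlib

section
/- A mechanism M is (ε, 0)-DP if and only if for all neighboring D, D', the trade-off function satisfies T(M(D), M(D'))(α) ≥ max(0, 1 − e^ε·α, e^{−ε}(1 − α)) for all α ∈ [0,1]. -/
open MeasureTheory

/-- The trade-off function `T(P,Q)(α)`: the infimum type-II error over all
measurable rejection rules `φ : X → [0,1]` with type-I error at most `α`. -/
noncomputable def tradeoff {X : Type*} [MeasurableSpace X]
    (P Q : Measure X) (α : ℝ) : ℝ :=
  sInf {β : ℝ | ∃ φ : X → ℝ, Measurable φ ∧ (∀ x, φ x ∈ Set.Icc (0:ℝ) 1) ∧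
    (∫ x, φ x ∂P) ≤ α ∧ β = ∫ x, (1 - φ x) ∂Q}

lemma integrable_of_mem_Icc {X : Type*} [MeasurableSpace X] (μ : Measure X)
    [IsProbabilityMeasure μ] {φ : X → ℝ} (hm : Measurable φ)
    (hb : ∀ x, φ x ∈ Set.Icc (0:ℝ) 1) : Integrable φ μ := by
  apply Integrable.mono' (integrable_const (1:ℝ)) hm.aestronglyMeasurable
  filter_upwards with x
  rw [Real.norm_eq_abs, abs_of_nonneg (hb x).1]; exact (hb x).2

lemma lintegral_lt_top_of_mem_Icc {X : Type*} [MeasurableSpace X] (μ : Measure X)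
    [IsProbabilityMeasure μ] {φ : X → ℝ}
    (hb : ∀ x, φ x ∈ Set.Icc (0:ℝ) 1) :
    ∫⁻ x, ENNReal.ofReal (φ x) ∂μ ≠ ⊤ := by
  have : ∫⁻ x, ENNReal.ofReal (φ x) ∂μ ≤ ∫⁻ _, 1 ∂μ := by
    refine lintegral_mono fun x => ?_
    simpa using ENNReal.ofReal_le_one.2 (hb x).2
  refine ne_top_of_le_ne_top ?_ this
  simp

lemma integral_le_of_dp {X : Type*} [MeasurableSpace X] (P Q : Measure X)
    [IsProbabilityMeasure P] [IsProbabilityMeasure Q] (ε : ℝ)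
    (h : ∀ S : Set X, MeasurableSet S → P S ≤ ENNReal.ofReal (Real.exp ε) * Q S)
    {φ : X → ℝ} (hm : Measurable φ) (hb : ∀ x, φ x ∈ Set.Icc (0:ℝ) 1) :
    ∫ x, φ x ∂P ≤ Real.exp ε * ∫ x, φ x ∂Q := by
  set c : ENNReal := ENNReal.ofReal (Real.exp ε) with hc
  have hnn : ∀ x, 0 ≤ φ x := fun x => (hb x).1
  have key : ∫⁻ x, ENNReal.ofReal (φ x) ∂P ≤ c * ∫⁻ x, ENNReal.ofReal (φ x) ∂Q := by
    rw [lintegral_eq_lintegral_meas_lt P (Filter.Eventually.of_forall hnn) hm.aemeasurable,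
      lintegral_eq_lintegral_meas_lt Q (Filter.Eventually.of_forall hnn) hm.aemeasurable,
      ← lintegral_const_mul' c _ ENNReal.ofReal_ne_top]
    exact lintegral_mono fun t => h _ (measurableSet_lt measurable_const hm)
  have hQfin : ∫⁻ x, ENNReal.ofReal (φ x) ∂Q ≠ ⊤ := lintegral_lt_top_of_mem_Icc Q hb
  have hPrepr : ∫ x, φ x ∂P = (∫⁻ x, ENNReal.ofReal (φ x) ∂P).toReal :=
    integral_eq_lintegral_of_nonneg_ae (Filter.Eventually.of_forall hnn)
      hm.aestronglyMeasurable
  have hQrepr : ∫ x, φ x ∂Q = (∫⁻ x, ENNReal.ofReal (φ x) ∂Q).toReal :=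
    integral_eq_lintegral_of_nonneg_ae (Filter.Eventually.of_forall hnn)
      hm.aestronglyMeasurable
  rw [hPrepr, hQrepr]
  calc (∫⁻ x, ENNReal.ofReal (φ x) ∂P).toReal
      ≤ (c * ∫⁻ x, ENNReal.ofReal (φ x) ∂Q).toReal := by
        exact ENNReal.toReal_mono (ENNReal.mul_ne_top ENNReal.ofReal_ne_top hQfin) key
    _ = Real.exp ε * (∫⁻ x, ENNReal.ofReal (φ x) ∂Q).toReal := by
        rw [ENNReal.toReal_mul, hc, ENNReal.toReal_ofReal (Real.exp_nonneg ε)]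

/-- M is (ε,0)-DP (for both orderings of neighbors) iff for all
neighboring D, D' the trade-off function dominates
max(0, 1 − e^ε·α, e^{−ε}(1 − α)). -/
theorem pureDP_iff_tradeoff_bound
    {𝒟 X : Type*} [MeasurableSpace X]
    (Neighbor : 𝒟 → 𝒟 → Prop) (hsym : ∀ D D', Neighbor D D' → Neighbor D' D)
    (M : 𝒟 → Measure X) (hprob : ∀ D, IsProbabilityMeasure (M D)) (ε : ℝ) :
    (∀ D D', Neighbor D D' → ∀ S : Set X, MeasurableSet S →
        M D S ≤ ENNReal.ofReal (Real.exp ε) * M D' S) ↔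
    (∀ D D', Neighbor D D' → ∀ α ∈ Set.Icc (0:ℝ) 1,
        max 0 (max (1 - Real.exp ε * α) (Real.exp (-ε) * (1 - α))) ≤
          tradeoff (M D) (M D') α) := by
  constructor
  · intro hdp D D' hN α hα
    haveI := hprob D; haveI := hprob D'
    set P := M D with hP
    set Q := M D' with hQ
    -- the set is nonempty (constant test α)
    have hne : {β : ℝ | ∃ φ : X → ℝ, Measurable φ ∧ (∀ x, φ x ∈ Set.Icc (0:ℝ) 1) ∧
        (∫ x, φ x ∂P) ≤ α ∧ β = ∫ x, (1 - φ x) ∂Q}.Nonempty := by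
      refine ⟨∫ x, (1 - (fun _ : X => α) x) ∂Q, fun _ => α, measurable_const,
        fun x => hα, ?_, rfl⟩
      simp
    refine le_csInf hne ?_
    rintro β ⟨φ, hm, hb, hα1, rfl⟩
    have hintP : Integrable φ P := integrable_of_mem_Icc P hm hb
    have hintQ : Integrable φ Q := integrable_of_mem_Icc Q hm hb
    have hsplitQ : ∫ x, (1 - φ x) ∂Q = 1 - ∫ x, φ x ∂Q := by
      rw [integral_sub (integrable_const 1) hintQ]
      simp
    have hsplitP : ∫ x, (1 - φ x) ∂P = 1 - ∫ x, φ x ∂P := by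
      rw [integral_sub (integrable_const 1) hintP]
      simp
    have hQleP : ∫ x, φ x ∂Q ≤ Real.exp ε * ∫ x, φ x ∂P :=
      integral_le_of_dp Q P ε (hdp D' D (hsym D D' hN)) hm hb
    have hbound2 : 1 - Real.exp ε * α ≤ ∫ x, (1 - φ x) ∂Q := by
      rw [hsplitQ]
      have : ∫ x, φ x ∂Q ≤ Real.exp ε * α :=
        le_trans hQleP (by nlinarith [Real.exp_pos ε])
      linarith
    have hb' : ∀ x, (1 - φ x) ∈ Set.Icc (0:ℝ) 1 := fun x =>
      ⟨by linarith [(hb x).2], by linarith [(hb x).1]⟩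
    have hPleQ : ∫ x, (1 - φ x) ∂P ≤ Real.exp ε * ∫ x, (1 - φ x) ∂Q :=
      integral_le_of_dp P Q ε (hdp D D' hN) (measurable_const.sub hm) hb'
    have hbound3 : Real.exp (-ε) * (1 - α) ≤ ∫ x, (1 - φ x) ∂Q := by
      have h1 : 1 - α ≤ ∫ x, (1 - φ x) ∂P := by rw [hsplitP]; linarith
      have h2 : (1 - α) ≤ Real.exp ε * ∫ x, (1 - φ x) ∂Q := le_trans h1 hPleQ
      calc Real.exp (-ε) * (1 - α)
          ≤ Real.exp (-ε) * (Real.exp ε * ∫ x, (1 - φ x) ∂Q) :=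
            mul_le_mul_of_nonneg_left h2 (Real.exp_pos _).le
        _ = ∫ x, (1 - φ x) ∂Q := by rw [← mul_assoc, ← Real.exp_add]; simp
    have hbound1 : (0:ℝ) ≤ ∫ x, (1 - φ x) ∂Q :=
      integral_nonneg fun x => sub_nonneg.2 (hb x).2
    exact max_le hbound1 (max_le hbound2 hbound3)
  · intro htr D D' hN S hS
    haveI := hprob D; haveI := hprob D'
    set P := M D with hP
    set Q := M D' with hQ
    -- use the test φ = indicator of Sᶜ
    set φ : X → ℝ := Set.indicator Sᶜ (fun _ => 1) with hφ
    have hm : Measurable φ := (measurable_const.indicator hS.compl)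
    have hb : ∀ x, φ x ∈ Set.Icc (0:ℝ) 1 := by
      intro x
      by_cases hx : x ∈ Sᶜ <;> simp [hφ, hx]
    have hIP : ∫ x, φ x ∂P = (P Sᶜ).toReal := by
      rw [hφ, integral_indicator_const (1:ℝ) hS.compl]
      simp; rfl
    have hIQ : ∫ x, (1 - φ x) ∂Q = (Q S).toReal := by
      have : ∀ x, 1 - φ x = Set.indicator S (fun _ => (1:ℝ)) x := by
        intro x
        by_cases hx : x ∈ S <;> simp [hφ, hx]
      simp_rw [this]
      rw [integral_indicator_const (1:ℝ) hS]
      simp; rfl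
    set α : ℝ := (P Sᶜ).toReal with hα
    have hαIcc : α ∈ Set.Icc (0:ℝ) 1 := by
      constructor
      · exact ENNReal.toReal_nonneg
      · rw [hα]
        have : P Sᶜ ≤ 1 := prob_le_one
        simpa using ENNReal.toReal_mono ENNReal.one_ne_top this
    have hmem : (Q S).toReal ∈ {β : ℝ | ∃ φ : X → ℝ, Measurable φ ∧
        (∀ x, φ x ∈ Set.Icc (0:ℝ) 1) ∧
        (∫ x, φ x ∂P) ≤ α ∧ β = ∫ x, (1 - φ x) ∂Q} :=
      ⟨φ, hm, hb, le_of_eq hIP, hIQ.symm⟩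
    have hbdd : BddBelow {β : ℝ | ∃ φ : X → ℝ, Measurable φ ∧
        (∀ x, φ x ∈ Set.Icc (0:ℝ) 1) ∧
        (∫ x, φ x ∂P) ≤ α ∧ β = ∫ x, (1 - φ x) ∂Q} := by
      refine ⟨0, ?_⟩
      rintro β ⟨ψ, hmψ, hbψ, _, rfl⟩
      exact integral_nonneg fun x => sub_nonneg.2 (hbψ x).2
    have htle : tradeoff P Q α ≤ (Q S).toReal := csInf_le hbdd hmem
    have hkey := htr D D' hN α hαIcc
    have h3 : Real.exp (-ε) * (1 - α) ≤ (Q S).toReal := by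
      refine le_trans (le_trans ?_ hkey) htle
      exact le_trans (le_max_right _ _) (le_max_right _ _)
    have hPS : (P S).toReal = 1 - α := by
      have hadd : P S + P Sᶜ = 1 := prob_add_prob_compl hS
      have hr : (P S).toReal + (P Sᶜ).toReal = 1 := by
        rw [← ENNReal.toReal_add (measure_ne_top _ _) (measure_ne_top _ _), hadd]
        simp
      rw [hα]; linarith
    have h4 : (P S).toReal ≤ Real.exp ε * (Q S).toReal := by
      rw [hPS]
      calc 1 - α = Real.exp ε * (Real.exp (-ε) * (1 - α)) := by
            rw [← mul_assoc, ← Real.exp_add]; simp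
        _ ≤ Real.exp ε * (Q S).toReal :=
            mul_le_mul_of_nonneg_left h3 (Real.exp_pos _).le
    have hPfin : P S ≠ ⊤ := measure_ne_top P S
    calc P S = ENNReal.ofReal ((P S).toReal) := (ENNReal.ofReal_toReal hPfin).symm
      _ ≤ ENNReal.ofReal (Real.exp ε * (Q S).toReal) := ENNReal.ofReal_le_ofReal h4
      _ = ENNReal.ofReal (Real.exp ε) * ENNReal.ofReal ((Q S).toReal) :=
          ENNReal.ofReal_mul (Real.exp_nonneg ε)
      _ = ENNReal.ofReal (Real.exp ε) * Q S := by
          rw [ENNReal.ofReal_toReal (measure_ne_top Q S)]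
end

section
/- The trade-off function of two Gaussians with equal variance has closed form: T(N(0,σ²), N(μ,σ²))(α) = Φ(Φ^{−1}(1 − α) − μ/σ), where Φ is the standard normal CDF. -/
open MeasureTheory

open ProbabilityTheory Real

namespace GTAux

lemma gauss_map {σ : NNReal} (hσ : 0 < σ) (m : ℝ) :
    gaussianReal m (σ^2) = (gaussianReal 0 1).map (fun x => (σ:ℝ) * x + m) := by
  have h1 : (gaussianReal (0:ℝ) 1).map ((σ:ℝ) * ·) = gaussianReal 0 (σ^2) := by
    rw [gaussianReal_map_const_mul]
    congr 1
    · ring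
    · ext; push_cast; ring
  have h2 : (gaussianReal (0:ℝ) (σ^2)).map (· + m) = gaussianReal m (σ^2) := by
    rw [gaussianReal_map_add_const, zero_add]
  rw [← h2, ← h1]
  exact Measure.map_map (measurable_add_const m) (measurable_const_mul _)

lemma cdf_Iic {σ : NNReal} (hσ : 0 < σ) (m s : ℝ) (Φ : ℝ → ℝ)
    (hΦ : ∀ x, Φ x = ((gaussianReal 0 1) (Set.Iic x)).toReal) :
    ((gaussianReal m (σ^2)) (Set.Iic s)).toReal = Φ ((s - m) / σ) := by
  have hσ' : (0:ℝ) < σ := hσ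
  rw [gauss_map hσ m, Measure.map_apply (by fun_prop) measurableSet_Iic, hΦ]
  congr 2
  ext x
  simp only [Set.mem_preimage, Set.mem_Iic]
  rw [le_div_iff₀ hσ']
  constructor <;> intro h <;> nlinarith

lemma cdf_Iio {σ : NNReal} (hσ : 0 < σ) (m s : ℝ) (Φ : ℝ → ℝ)
    (hΦ : ∀ x, Φ x = ((gaussianReal 0 1) (Set.Iic x)).toReal) :
    ((gaussianReal m (σ^2)) (Set.Iio s)).toReal = Φ ((s - m) / σ) := by
  have hv : (σ^2 : NNReal) ≠ 0 := pow_ne_zero 2 hσ.ne'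
  rw [← cdf_Iic hσ m s Φ hΦ]
  congr 1
  have hsing : (gaussianReal m (σ^2)) {s} = 0 :=
    gaussianReal_absolutelyContinuous m hv (measure_singleton s)
  refine measure_congr (ae_eq_set.mpr ⟨by simp, ?_⟩)
  rw [show Set.Iic s \ Set.Iio s = {s} by ext x; simp [le_antisymm_iff, and_comm]]
  exact hsing

lemma cdf_Ici {σ : NNReal} (hσ : 0 < σ) (m s : ℝ) (Φ : ℝ → ℝ)
    (hΦ : ∀ x, Φ x = ((gaussianReal 0 1) (Set.Iic x)).toReal) :
    ((gaussianReal m (σ^2)) (Set.Ici s)).toReal = 1 - Φ ((s - m) / σ) := by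
  rw [← cdf_Iio hσ m s Φ hΦ, show Set.Ici s = (Set.Iio s)ᶜ from Set.compl_Iio.symm,
    measure_compl measurableSet_Iio (measure_ne_top _ _),
    ENNReal.toReal_sub_of_le (measure_mono (Set.subset_univ _)) (measure_ne_top _ _)]
  simp

lemma integral_gauss {σ : NNReal} (hσ : 0 < σ) (m : ℝ) (g : ℝ → ℝ) :
    ∫ x, g x ∂(gaussianReal m (σ^2)) = ∫ x, gaussianPDFReal m (σ^2) x * g x := by
  have hv : (σ^2 : NNReal) ≠ 0 := pow_ne_zero 2 hσ.ne'
  rw [gaussianReal_of_var_ne_zero m hv]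
  have h : (gaussianPDF m (σ^2)) = fun x => ((gaussianPDFReal m (σ^2) x).toNNReal : ENNReal) := rfl
  rw [h, integral_withDensity_eq_integral_smul (measurable_gaussianPDFReal m (σ^2)).real_toNNReal g]
  congr 1
  ext x
  rw [NNReal.smul_def, smul_eq_mul, Real.coe_toNNReal _ (gaussianPDFReal_nonneg _ _ _)]

lemma pdf_ratio {σ : NNReal} (hσ : 0 < σ) (m x : ℝ) :
    gaussianPDFReal m (σ^2) x
      = gaussianPDFReal 0 (σ^2) x * rexp ((2*m*x - m^2) / (2*(σ:ℝ)^2)) := by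
  have hσ' : (0:ℝ) < σ := hσ
  simp only [gaussianPDFReal, sub_zero]
  conv_rhs => rw [mul_assoc, ← Real.exp_add]
  congr 2
  push_cast
  field_simp
  ring

lemma integrable_pdf_mul (m : ℝ) (v : NNReal) {g : ℝ → ℝ} (hg : Measurable g)
    (hb : ∀ x, |g x| ≤ 1) : Integrable (fun x => gaussianPDFReal m v x * g x) := by
  refine (integrable_gaussianPDFReal m v).mono'
    ((measurable_gaussianPDFReal m v).mul hg).aestronglyMeasurable (ae_of_all _ fun x => ?_)
  rw [Real.norm_eq_abs, abs_mul, abs_of_nonneg (gaussianPDFReal_nonneg m v x)]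
  have h0 := gaussianPDFReal_nonneg m v x
  nlinarith [hb x, abs_nonneg (g x)]

end GTAux

set_option maxHeartbeats 1000000

/-- closed form of the Gaussian trade-off function:
T(N(0,σ²), N(μ,σ²))(α) = Φ(Φ⁻¹(1 − α) − μ/σ). -/
theorem gaussian_tradeoff_closed_form
    (σ : NNReal) (hσ : 0 < σ) (μ : ℝ) (hμ : 0 ≤ μ)
    (Φ : ℝ → ℝ) (hΦ : ∀ x, Φ x = ((gaussianReal 0 1) (Set.Iic x)).toReal)
    (Φinv : ℝ → ℝ) (hΦinv : ∀ y ∈ Set.Ioo (0:ℝ) 1, Φ (Φinv y) = y)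
    (α : ℝ) (hα : α ∈ Set.Ioo (0:ℝ) 1) :
    tradeoff (gaussianReal 0 (σ ^ 2)) (gaussianReal μ (σ ^ 2)) α =
      Φ (Φinv (1 - α) - μ / σ) := by
  classical
  obtain ⟨hα0, hα1⟩ := hα
  have hσ' : (0:ℝ) < σ := hσ
  set P := gaussianReal 0 (σ^2) with hPdef
  set Q := gaussianReal μ (σ^2) with hQdef
  set t : ℝ := σ * Φinv (1 - α) with htdef
  set B : ℝ := Φ (Φinv (1 - α) - μ / σ) with hBdef
  have h1α : (1 - α) ∈ Set.Ioo (0:ℝ) 1 := ⟨by linarith, by linarith⟩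
  have hΦΦ : Φ (Φinv (1 - α)) = 1 - α := hΦinv _ h1α
  -- the optimal test
  set ψ : ℝ → ℝ := Set.indicator (Set.Ici t) (fun _ => (1:ℝ)) with hψdef
  have hψ_meas : Measurable ψ := measurable_const.indicator measurableSet_Ici
  have hψ_mem : ∀ x, ψ x ∈ Set.Icc (0:ℝ) 1 := by
    intro x
    by_cases h : x ∈ Set.Ici t <;> simp [hψdef, Set.indicator, h]
  have htσ : t / σ = Φinv (1 - α) := by rw [htdef]; field_simp
  have htμσ : (t - μ) / σ = Φinv (1 - α) - μ / σ := by rw [htdef]; field_simp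
  have hψP : ∫ x, ψ x ∂P = α := by
    rw [hψdef, integral_indicator_const _ measurableSet_Ici, smul_eq_mul, mul_one, hPdef, measureReal_def,
      GTAux.cdf_Ici hσ 0 t Φ hΦ, sub_zero, htσ, hΦΦ]
    ring
  have hψQ : ∫ x, (1 - ψ x) ∂Q = B := by
    have h1ψ : (fun x => 1 - ψ x) = Set.indicator (Set.Iio t) (fun _ => (1:ℝ)) := by
      ext x
      by_cases h : t ≤ x
      · simp [hψdef, Set.indicator, h, not_lt.mpr h]
      · simp [hψdef, Set.indicator, h, not_le.mp h]
    rw [h1ψ, integral_indicator_const _ measurableSet_Iio, smul_eq_mul, mul_one, hQdef, measureReal_def,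
      GTAux.cdf_Iio hσ μ t Φ hΦ, htμσ]
  -- densities
  set p : ℝ → ℝ := gaussianPDFReal 0 (σ^2) with hpdef
  set q : ℝ → ℝ := gaussianPDFReal μ (σ^2) with hqdef
  set k : ℝ := Real.exp ((2*μ*t - μ^2) / (2*(σ:ℝ)^2)) with hkdef
  -- lower bound: every achievable β is ≥ B
  have hlb : ∀ b ∈ {β : ℝ | ∃ φ : ℝ → ℝ, Measurable φ ∧ (∀ x, φ x ∈ Set.Icc (0:ℝ) 1) ∧
      (∫ x, φ x ∂P) ≤ α ∧ β = ∫ x, (1 - φ x) ∂Q}, B ≤ b := by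
    rintro b ⟨φ, hφm, hφ01, hφα, rfl⟩
    have hφb : ∀ x, |φ x| ≤ 1 := fun x => abs_le.mpr ⟨by linarith [(hφ01 x).1], (hφ01 x).2⟩
    have hψb : ∀ x, |ψ x| ≤ 1 := fun x => abs_le.mpr ⟨by linarith [(hψ_mem x).1], (hψ_mem x).2⟩
    have hIqψ : Integrable (fun x => q x * ψ x) := GTAux.integrable_pdf_mul μ (σ^2) hψ_meas hψb
    have hIqφ : Integrable (fun x => q x * φ x) := GTAux.integrable_pdf_mul μ (σ^2) hφm hφb
    have hIpψ : Integrable (fun x => p x * ψ x) := GTAux.integrable_pdf_mul 0 (σ^2) hψ_meas hψb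
    have hIpφ : Integrable (fun x => p x * φ x) := GTAux.integrable_pdf_mul 0 (σ^2) hφm hφb
    -- pointwise Neyman–Pearson inequality
    have hpt : ∀ x, 0 ≤ (ψ x - φ x) * (q x - k * p x) := by
      intro x
      have hratio : q x = p x * Real.exp ((2*μ*x - μ^2) / (2*(σ:ℝ)^2)) :=
        GTAux.pdf_ratio hσ μ x
      have hppos : 0 < p x := gaussianPDFReal_pos 0 (σ^2) x (pow_ne_zero 2 hσ.ne')
      rcases le_or_gt t x with h | h
      · have hψ1 : ψ x = 1 := Set.indicator_of_mem h _
        have hqk : k * p x ≤ q x := by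
          have hle : (2*μ*t - μ^2) / (2*(σ:ℝ)^2) ≤ (2*μ*x - μ^2) / (2*(σ:ℝ)^2) := by
            exact div_le_div_of_nonneg_right (by nlinarith) (by positivity)
          have hek := Real.exp_le_exp.mpr hle
          rw [hratio, hkdef]
          nlinarith [mul_le_mul_of_nonneg_left hek hppos.le]
        have := (hφ01 x).2
        nlinarith
      · have hψ0 : ψ x = 0 := Set.indicator_of_notMem (not_le.mpr h) _
        have hqk : q x ≤ k * p x := by
          have hle : (2*μ*x - μ^2) / (2*(σ:ℝ)^2) ≤ (2*μ*t - μ^2) / (2*(σ:ℝ)^2) := by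
            exact div_le_div_of_nonneg_right (by nlinarith) (by positivity)
          have hek := Real.exp_le_exp.mpr hle
          rw [hratio, hkdef]
          nlinarith [mul_le_mul_of_nonneg_left hek hppos.le]
        have := (hφ01 x).1
        nlinarith
    have hIint : Integrable (fun x => (ψ x - φ x) * (q x - k * p x)) := by
      have : (fun x => (ψ x - φ x) * (q x - k * p x))
          = fun x => (q x * ψ x - q x * φ x) - k * (p x * ψ x - p x * φ x) := by
        ext x; ring
      rw [this]
      exact ((hIqψ.sub hIqφ).sub ((hIpψ.sub hIpφ).const_mul k))
    have hsplit : ∫ x, (ψ x - φ x) * (q x - k * p x)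
        = ((∫ x, q x * ψ x) - ∫ x, q x * φ x)
          - k * ((∫ x, p x * ψ x) - ∫ x, p x * φ x) := by
      have hA : Integrable (fun a => q a * ψ a - q a * φ a) := by exact hIqψ.sub hIqφ
      have hB : Integrable (fun a => k * (p a * ψ a - p a * φ a)) := by
        exact (hIpψ.sub hIpφ).const_mul k
      rw [← integral_sub hIqψ hIqφ, ← integral_sub hIpψ hIpφ, ← integral_const_mul,
        ← integral_sub hA hB]
      congr 1
      ext x
      ring
    have hnp : 0 ≤ ((∫ x, q x * ψ x) - ∫ x, q x * φ x)
          - k * ((∫ x, p x * ψ x) - ∫ x, p x * φ x) := by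
      rw [← hsplit]
      exact integral_nonneg hpt
    -- translate integrals back to the measures
    have hPψ : ∫ x, p x * ψ x = ∫ x, ψ x ∂P := (GTAux.integral_gauss hσ 0 ψ).symm
    have hPφ : ∫ x, p x * φ x = ∫ x, φ x ∂P := (GTAux.integral_gauss hσ 0 φ).symm
    have hQψ : ∫ x, q x * ψ x = ∫ x, ψ x ∂Q := (GTAux.integral_gauss hσ μ ψ).symm
    have hQφ : ∫ x, q x * φ x = ∫ x, φ x ∂Q := (GTAux.integral_gauss hσ μ φ).symm
    have hk0 : 0 ≤ k := le_of_lt (Real.exp_pos _)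
    have hPineq : ∫ x, φ x ∂P ≤ ∫ x, ψ x ∂P := by rw [hψP]; exact hφα
    have hd : (0:ℝ) ≤ (∫ x, p x * ψ x) - ∫ x, p x * φ x := by
      rw [hPψ, hPφ]; linarith
    have hkd : (0:ℝ) ≤ k * ((∫ x, p x * ψ x) - ∫ x, p x * φ x) := mul_nonneg hk0 hd
    have hQineq : ∫ x, φ x ∂Q ≤ ∫ x, ψ x ∂Q := by
      rw [← hQψ, ← hQφ]; linarith
    -- conclude
    have hφQI : Integrable φ Q := by
      refine (integrable_const (1:ℝ)).mono' hφm.aestronglyMeasurable (ae_of_all _ fun x => ?_)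
      rw [Real.norm_eq_abs]
      exact hφb x
    have hψQI : Integrable ψ Q := by
      refine (integrable_const (1:ℝ)).mono' hψ_meas.aestronglyMeasurable (ae_of_all _ fun x => ?_)
      rw [Real.norm_eq_abs]
      exact hψb x
    have e1 : ∫ x, (1 - φ x) ∂Q = 1 - ∫ x, φ x ∂Q := by
      rw [integral_sub (integrable_const 1) hφQI, integral_const]
      simp
    have e2 : ∫ x, (1 - ψ x) ∂Q = 1 - ∫ x, ψ x ∂Q := by
      rw [integral_sub (integrable_const 1) hψQI, integral_const]
      simp
    rw [e1, ← hψQ, e2]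
    linarith
  have hmem : B ∈ {β : ℝ | ∃ φ : ℝ → ℝ, Measurable φ ∧ (∀ x, φ x ∈ Set.Icc (0:ℝ) 1) ∧
      (∫ x, φ x ∂P) ≤ α ∧ β = ∫ x, (1 - φ x) ∂Q} :=
    ⟨ψ, hψ_meas, hψ_mem, le_of_eq hψP, hψQ.symm⟩
  rw [tradeoff]
  exact le_antisymm (csInf_le ⟨B, fun b hb => hlb b hb⟩ hmem) (le_csInf ⟨B, hmem⟩ hlb)
end
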